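/- arXiv:1010.0120 — 4 statements merged into one kernel-verified Lean document; each statement's English description precedes it below -/
import Mathlib

section
/- Let k = 𝔽_q be a finite field with q elements and let f ∈ k[X]. The following are equivalent: (a) f(X + a) = f(X) as polynomials for every a ∈ k; (b) there exists g ∈ k[X] such that f(X) = g(X^q − X). -/
open Polynomial

lemma pi_invariant {k : Type*} [Field k] [Fintype k] (q : ℕ) (hq : Fintype.card k = q)
    (a : k) : (X ^ q - X : Polynomial k).comp (X + C a) = X ^ q - X := by
  obtain ⟨p, hp⟩ := CharP.exists k
  haveI := hp
  obtain ⟨n, hpp, hcard⟩ := FiniteField.card k p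
  haveI : Fact p.Prime := ⟨hpp⟩
  have hq' : q = p ^ (n : ℕ) := by rw [← hq, hcard]
  have hfrob : (X + C a : Polynomial k) ^ q = X ^ q + (C a) ^ q := by
    rw [hq']
    haveI : CharP (Polynomial k) p := Polynomial.instCharP p
    exact add_pow_char_pow ..
  have haq : a ^ q = a := by rw [← hq]; exact FiniteField.pow_card a
  simp only [sub_comp, pow_comp, X_comp]
  rw [hfrob, ← C_pow, haq]
  ring

lemma key {k : Type*} [Field k] [Fintype k] (q : ℕ) (hq : Fintype.card k = q)
    (f : Polynomial k) (hf : ∀ a : k, f.comp (X + C a) = f) :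
    ∃ g : Polynomial k, f = g.comp (X ^ q - X) := by
  have hq2 : 2 ≤ q := hq ▸ Fintype.one_lt_card
  set π : Polynomial k := X ^ q - X with hπ
  have hmonic : π.Monic := by
    apply monic_X_pow_sub
    rw [degree_X]
    exact_mod_cast by omega
  have hdegπ : π.degree = q := by
    rw [hπ, degree_sub_eq_left_of_degree_lt]
    · exact degree_X_pow q
    · rw [degree_X_pow, degree_X]; exact_mod_cast by omega
  suffices H : ∀ n (f : Polynomial k), f.natDegree = n →
      (∀ a : k, f.comp (X + C a) = f) → ∃ g : Polynomial k, f = g.comp π by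
    exact H f.natDegree f rfl hf
  intro n
  induction n using Nat.strong_induction_on with
  | _ n ih =>
  intro f hn hf
  by_cases h0 : f.natDegree = 0
  · refine ⟨C (f.coeff 0), ?_⟩
    conv_lhs => rw [Polynomial.eq_C_of_natDegree_eq_zero h0]
    rw [C_comp]
  set h := f /ₘ π with hh
  set r := f %ₘ π with hr
  have hfd : f = π * h + r := by
    rw [hh, hr, add_comm]; exact (modByMonic_add_div f π).symm
  have hrdeg : r.degree < π.degree := degree_modByMonic_lt f hmonic
  have hinv : ∀ a : k, h.comp (X + C a) = h ∧ r.comp (X + C a) = r := by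
    intro a
    have hc : (r.comp (X + C a)) + π * (h.comp (X + C a)) = f := by
      have hfa := hf a
      conv_lhs at hfa => rw [hfd]
      rw [add_comp, mul_comp, pi_invariant q hq a] at hfa
      rw [add_comm]
      exact hfa
    have hdr : (r.comp (X + C a)).degree < π.degree := by
      rcases eq_or_ne r 0 with h0' | h0'
      · rw [h0', zero_comp, degree_zero, hdegπ]
        exact_mod_cast WithBot.bot_lt_coe q
      · have h1 : (r.comp (X + C a)).natDegree = r.natDegree := by
          rw [natDegree_comp]
          have hx : (X + C a : Polynomial k).natDegree = 1 := by
            simpa using natDegree_X_add_C a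
          rw [hx, mul_one]
        have h2 : r.comp (X + C a) ≠ 0 := by
          intro hz
          have hz' := congrArg (fun p => p.comp (X - C a)) hz
          simp only [comp_assoc, add_comp, X_comp, C_comp, zero_comp] at hz'
          rw [show (X - C a + C a : Polynomial k) = X by ring, comp_X] at hz'
          exact h0' hz'
        rw [degree_eq_natDegree h2, h1, ← degree_eq_natDegree h0']
        exact hrdeg
    have := div_modByMonic_unique (h.comp (X + C a)) (r.comp (X + C a)) hmonic ⟨hc, hdr⟩
    exact ⟨this.1.symm, this.2.symm⟩
  have hrconst : r = C (r.eval 0) := by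
    have hz : r - C (r.eval 0) = 0 := by
      apply eq_zero_of_natDegree_lt_card_of_eval_eq_zero _ (Function.injective_id (α := k))
      · intro b
        have hb : r.eval b = r.eval 0 := by
          calc r.eval b = (r.comp (X + C b)).eval 0 := by simp
            _ = r.eval 0 := by rw [(hinv b).2]
        simp [hb]
      · have hlt : (r - C (r.eval 0)).natDegree < q := by
          calc (r - C (r.eval 0)).natDegree ≤ max r.natDegree (C (r.eval 0)).natDegree :=
                natDegree_sub_le _ _
            _ < q := by
                rw [natDegree_C]
                simp only [max_lt_iff]
                refine ⟨?_, by omega⟩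
                rcases eq_or_ne r 0 with h0' | h0'
                · rw [h0', natDegree_zero]; omega
                · have := hrdeg
                  rw [hdegπ, degree_eq_natDegree h0'] at this
                  exact_mod_cast this
        rwa [hq]
    exact sub_eq_zero.mp hz
  -- h has smaller degree
  have hhdeg : h.natDegree < n := by
    rw [← hn, hh, natDegree_divByMonic f hmonic]
    have hπn : π.natDegree = q := natDegree_eq_of_degree_eq_some hdegπ
    rw [hπn]
    omega
  obtain ⟨g₀, hg₀⟩ := ih h.natDegree hhdeg h rfl (fun a => (hinv a).1)
  refine ⟨X * g₀ + C (r.eval 0), ?_⟩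
  rw [add_comp, mul_comp, X_comp, C_comp, ← hg₀, ← hrconst, hfd]

/-- For `k = 𝔽_q` and `f ∈ k[X]`, `f(X + a) = f(X)` for all `a ∈ k`
iff `f(X) = g(X^q - X)` for some `g ∈ k[X]`. -/
theorem stmt0 {k : Type*} [Field k] [Fintype k] (q : ℕ) (hq : Fintype.card k = q)
    (f : Polynomial k) :
    (∀ a : k, f.comp (X + C a) = f) ↔ ∃ g : Polynomial k, f = g.comp (X ^ q - X) := by
  constructor
  · exact key q hq f
  · rintro ⟨g, rfl⟩ a
    rw [comp_assoc, pi_invariant q hq a]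
end

section
/- Let k = 𝔽_q be a finite field, r ≥ 1, e ≥ 1 a divisor of q − 1, g ∈ k_r[X], f(X) = g(X^{(q−1)/e}), and ψ : k → ℂ a nontrivial additive character. Then ∑_{x ∈ k_r} ψ(Tr(f(x))) = ψ(Tr(g(0))) + ((q−1)/e) · ∑_{μ ∈ kˣ, μ^e = 1} ∑_{x ∈ k_rˣ, N(x) = μ} ψ(Tr(g(x))). -/
open Polynomial Finset

lemma normPowAux {k K : Type*} [Field k] [Fintype k] [Field K] [Fintype K] [Algebra k K]
    (q r : ℕ) (hq : Fintype.card k = q) (hK : Fintype.card K = q ^ r) (x : K) :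
    algebraMap k K (Algebra.norm k x) = x ^ (∑ i ∈ Finset.range r, q ^ i) := by
  classical
  have hq2 : 2 ≤ q := hq ▸ Fintype.one_lt_card
  haveI : Module.Finite k K := Module.Finite.of_finite
  set p := ringChar k with hp
  haveI hpk : CharP k p := ringChar.charP k
  haveI hpp : Fact p.Prime := ⟨CharP.char_is_prime k p⟩
  haveI : CharP K p := charP_of_injective_algebraMap (algebraMap k K).injective p
  obtain ⟨n, -, hn⟩ := FiniteField.card k p
  have hqpn : q = p ^ (n : ℕ) := hq.symm.trans hn
  have hfrobk : ∀ c : k, c ^ q = c := fun c => hq ▸ FiniteField.pow_card c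
  -- Frobenius as an AlgEquiv
  have hcomm : ∀ (c : k) (y : K),
      (iterateFrobenius K p n) (c • y) = c • (iterateFrobenius K p n) y := by
    intro c y
    simp only [Algebra.smul_def, map_mul]
    congr 1
    rw [iterateFrobenius_def, ← map_pow, ← hqpn, hfrobk]
  set φ0 : K →ₐ[k] K := AlgHom.mk' (iterateFrobenius K p n) hcomm with hφ0
  have hbij : Function.Bijective φ0 :=
    (Finite.injective_iff_bijective).1 (iterateFrobenius K p n).injective
  set φ : K ≃ₐ[k] K := AlgEquiv.ofBijective φ0 hbij with hφdef
  have hφ : ∀ y : K, φ y = y ^ q := by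
    intro y
    show iterateFrobenius K p n y = y ^ q
    rw [iterateFrobenius_def, hqpn]
  have hφpow : ∀ (i : ℕ) (y : K), (φ ^ i) y = y ^ q ^ i := by
    intro i
    induction i with
    | zero => intro y; simp
    | succ j ih =>
      intro y
      rw [pow_succ', pow_succ]
      have : (φ * φ ^ j) y = φ ((φ ^ j) y) := rfl
      rw [this, ih, hφ, ← pow_mul]
  -- finrank
  have hfr : Module.finrank k K = r := by
    have hcard : Fintype.card K = Fintype.card k ^ Module.finrank k K := Module.card_eq_pow_finrank
    rw [hK, hq] at hcard
    exact (Nat.pow_right_injective hq2 hcard).symm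
  have hcardG : Fintype.card (K ≃ₐ[k] K) = r := by
    rw [← Nat.card_eq_fintype_card, IsGalois.card_aut_eq_finrank, hfr]
  -- orderOf φ = r
  have hord_dvd : orderOf φ ∣ r := hcardG ▸ orderOf_dvd_card
  have hrpos : 0 < r := by
    rcases Nat.eq_zero_or_pos r with h | h
    · exfalso; rw [h, pow_zero] at hK
      exact absurd hK (by have := Fintype.one_lt_card (α := K); omega)
    · exact h
  have htpos : 0 < orderOf φ := orderOf_pos φ
  have hle : r ≤ orderOf φ := by
    set t := orderOf φ with ht
    have hqt : 1 < q ^ t := Nat.one_lt_pow htpos.ne' hq2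
    have hall : ∀ y : K, y ^ q ^ t = y := by
      intro y
      have := hφpow t y
      rw [pow_orderOf_eq_one φ] at this
      simpa using this.symm
    have hne : (X ^ q ^ t - X : K[X]) ≠ 0 := FiniteField.X_pow_card_sub_X_ne_zero K hqt
    have hsub : Finset.univ.val ≤ (X ^ q ^ t - X : K[X]).roots := by
      rw [Multiset.le_iff_subset Finset.univ.nodup]
      intro y _
      rw [Polynomial.mem_roots hne]
      simp [Polynomial.IsRoot, hall y]
    have hcardle : Fintype.card K ≤ q ^ t := by
      calc Fintype.card K = Multiset.card Finset.univ.val := (Finset.card_univ (α := K)) ▸ rfl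
        _ ≤ Multiset.card (X ^ q ^ t - X : K[X]).roots := Multiset.card_le_card hsub
        _ ≤ (X ^ q ^ t - X : K[X]).natDegree := Polynomial.card_roots' _
        _ = q ^ t := FiniteField.X_pow_card_sub_X_natDegree_eq K hqt
    rw [hK] at hcardle
    exact (Nat.pow_le_pow_iff_right hq2).1 hcardle
  have hordφ : orderOf φ = r := le_antisymm (Nat.le_of_dvd hrpos hord_dvd) hle
  -- product over automorphisms
  rw [Algebra.norm_eq_prod_automorphisms]
  have hsurj : ∀ σ : K ≃ₐ[k] K, ∃ i ∈ Finset.range r, φ ^ i = σ := by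
    intro σ
    have htop : Subgroup.zpowers φ = ⊤ := by
      apply Subgroup.eq_top_of_card_eq
      rw [Nat.card_zpowers, hordφ, Nat.card_eq_fintype_card, hcardG]
    have : σ ∈ Submonoid.powers φ := by
      rw [mem_powers_iff_mem_zpowers, htop]; trivial
    obtain ⟨i, hi⟩ := this
    have hi' : φ ^ i = σ := hi
    exact ⟨i % r, Finset.mem_range.2 (Nat.mod_lt _ hrpos), by
      rw [← hordφ, pow_mod_orderOf, hi']⟩
  have hinj : ∀ i ∈ Finset.range r, ∀ j ∈ Finset.range r, φ ^ i = φ ^ j → i = j := by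
    intro i hi j hj hij
    exact pow_injOn_Iio_orderOf (by simpa [hordφ] using Finset.mem_range.1 hi)
      (by simpa [hordφ] using Finset.mem_range.1 hj) hij
  rw [show (∏ σ : K ≃ₐ[k] K, σ x) = ∏ i ∈ Finset.range r, (φ ^ i) x from
    (Finset.prod_bij (fun i _ => φ ^ i) (fun i _ => Finset.mem_univ _) hinj
      (fun σ _ => by obtain ⟨i, hi, hiσ⟩ := hsurj σ; exact ⟨i, hi, hiσ⟩)
      (fun i _ => rfl)).symm]
  calc ∏ i ∈ Finset.range r, (φ ^ i) x = ∏ i ∈ Finset.range r, x ^ q ^ i := by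
        exact Finset.prod_congr rfl fun i _ => hφpow i x
    _ = x ^ (∑ i ∈ Finset.range r, q ^ i) := Finset.prod_pow_eq_pow_sum _ _ _


lemma sumPowAux {G : Type*} [CommGroup G] [Fintype G] [IsCyclic G] [DecidableEq G]
    {d : ℕ} (hd : d ∣ Fintype.card G) (hd0 : 0 < d) (F : G → ℂ) :
    ∑ x : G, F (x ^ d) =
      (d : ℂ) * ∑ z ∈ Finset.univ.filter (fun z : G => z ^ (Fintype.card G / d) = 1), F z := by
  classical
  set n := Fintype.card G with hn
  have hn0 : 0 < n := Fintype.card_pos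
  have hnd0 : 0 < n / d := Nat.div_pos (Nat.le_of_dvd hn0 hd) hd0
  obtain ⟨g, hg⟩ := IsCyclic.exists_generator (α := G)
  have hordg : orderOf g = n := by
    rw [orderOf_eq_card_of_forall_mem_zpowers hg, Nat.card_eq_fintype_card]
  -- image of the power map
  have himg : Finset.univ.image (fun x : G => x ^ d) =
      Finset.univ.filter (fun z : G => z ^ (n / d) = 1) := by
    ext z
    simp only [Finset.mem_image, Finset.mem_univ, true_and, Finset.mem_filter]
    constructor
    · rintro ⟨x, rfl⟩
      rw [← pow_mul, Nat.mul_div_cancel' hd, hn]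
      exact pow_card_eq_one
    · intro hz
      obtain ⟨i, hi⟩ := mem_powers_iff_mem_zpowers.2 (hg z)
      have hi' : g ^ i = z := hi
      have hdvd : n ∣ i * (n / d) := by
        have h2 : g ^ (i * (n / d)) = 1 := by rw [pow_mul, hi', hz]
        have := orderOf_dvd_of_pow_eq_one h2
        rwa [hordg] at this
      have hdi : d ∣ i := by
        have h1 : d * (n / d) ∣ i * (n / d) := by rwa [Nat.mul_div_cancel' hd]
        exact (Nat.mul_dvd_mul_iff_right hnd0).1 h1
      obtain ⟨j, rfl⟩ := hdi
      refine ⟨g ^ j, ?_⟩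
      rw [← pow_mul, mul_comm j d]
      exact hi'
  -- kernel cardinality
  have hker : (Finset.univ.filter fun x : G => x ^ d = 1).card = d := by
    have hord : orderOf (g ^ (n / d)) = d := by
      rw [orderOf_pow, hordg, Nat.gcd_eq_right (Nat.div_dvd_of_dvd hd),
        Nat.div_div_self hd hn0.ne']
    apply le_antisymm
    · exact IsCyclic.card_pow_eq_one_le hd0
    · have hsub : (Subgroup.zpowers (g ^ (n / d)) : Set G).toFinset ⊆
          Finset.univ.filter fun x : G => x ^ d = 1 := by
        intro y hy
        rw [Set.mem_toFinset] at hy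
        obtain ⟨j, hj⟩ := mem_powers_iff_mem_zpowers.2 hy
        have hj' : (g ^ (n / d)) ^ j = y := hj
        simp only [Finset.mem_filter, Finset.mem_univ, true_and]
        rw [← hj', ← pow_mul, mul_comm j d, ← pow_mul, ← mul_assoc,
          Nat.div_mul_cancel hd, pow_mul, hn, pow_card_eq_one, one_pow]
      calc d = Fintype.card (Subgroup.zpowers (g ^ (n / d))) := by
              rw [Fintype.card_zpowers, hord]
        _ = (Subgroup.zpowers (g ^ (n / d)) : Set G).toFinset.card := by
              rw [Set.toFinset_card]; rfl
        _ ≤ _ := Finset.card_le_card hsub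
  -- fibers all have cardinality d
  calc ∑ x : G, F (x ^ d)
      = ∑ z ∈ Finset.univ.image (fun x : G => x ^ d),
          (Finset.univ.filter fun x : G => x ^ d = z).card • F z :=
        Finset.sum_comp F (fun x : G => x ^ d)
    _ = ∑ z ∈ Finset.univ.filter (fun z : G => z ^ (n / d) = 1), (d : ℂ) * F z := by
        rw [himg]
        refine Finset.sum_congr rfl fun z hz => ?_
        have hzr : z ∈ Set.range (powMonoidHom d : G →* G) := by
          have := hz; rw [← himg, Finset.mem_image] at this
          obtain ⟨x, -, rfl⟩ := this
          exact ⟨x, rfl⟩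
        have h1r : (1 : G) ∈ Set.range (powMonoidHom d : G →* G) := ⟨1, by simp⟩
        have := MonoidHom.card_fiber_eq_of_mem_range (powMonoidHom d : G →* G) hzr h1r
        simp only [powMonoidHom_apply] at this
        rw [show (Finset.univ.filter fun x : G => x ^ d = z).card = d from this.trans hker]
        rw [nsmul_eq_mul]
    _ = (d : ℂ) * ∑ z ∈ Finset.univ.filter (fun z : G => z ^ (n / d) = 1), F z :=
        (Finset.mul_sum _ _ _).symm


section main
variable {k K : Type*} [Field k] [Fintype k] [Field K] [Fintype K] [Algebra k K]

open scoped Classical in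
theorem stmt4' (q r e : ℕ) (hq : Fintype.card k = q) (hr : 1 ≤ r) (hK : Fintype.card K = q ^ r)
    (he : 1 ≤ e) (hdvd : e ∣ q - 1)
    (g f : Polynomial K) (hf : f = g.comp (X ^ ((q - 1) / e)))
    (ψ : AddChar k ℂ) (hψ : ψ ≠ 1)
    (npa : ∀ x : K, algebraMap k K (Algebra.norm k x) = x ^ (∑ i ∈ Finset.range r, q ^ i))
    (spa : ∀ (d : ℕ), d ∣ Fintype.card Kˣ → 0 < d → ∀ F : Kˣ → ℂ,
      ∑ x : Kˣ, F (x ^ d) =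
        (d : ℂ) * ∑ z ∈ Finset.univ.filter (fun z : Kˣ => z ^ (Fintype.card Kˣ / d) = 1), F z) :
    ∑ x : K, ψ (Algebra.trace k K (f.eval x)) =
      ψ (Algebra.trace k K (g.eval 0)) +
        (((q - 1) / e : ℕ) : ℂ) *
          ∑ μ ∈ Finset.univ.filter (fun μ : kˣ => μ ^ e = 1),
            ∑ x ∈ Finset.univ.filter (fun x : Kˣ => Algebra.norm k (x : K) = (μ : k)),
              ψ (Algebra.trace k K (g.eval (x : K))) := by
  classical
  have hq2 : 2 ≤ q := hq ▸ Fintype.one_lt_card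
  set d := (q - 1) / e with hdq
  have hd0 : 0 < d := Nat.div_pos (Nat.le_of_dvd (by omega) hdvd) he
  have hde : d * e = q - 1 := Nat.div_mul_cancel hdvd
  set m := ∑ i ∈ Finset.range r, q ^ i with hm
  have h1q : (1 : ℕ) ≤ q := by omega
  have h1qr : (1 : ℕ) ≤ q ^ r := Nat.one_le_pow _ _ (by omega)
  have hmq : m * (q - 1) = q ^ r - 1 := by
    zify [h1q, h1qr]
    rw [hm]
    push_cast
    exact geom_sum_mul _ _
  have hcardU : Fintype.card Kˣ = q ^ r - 1 := by rw [Fintype.card_units, hK]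
  have hdK : d ∣ Fintype.card Kˣ := by
    rw [hcardU]
    exact dvd_trans ⟨e, hde.symm⟩ (by simpa using Nat.sub_dvd_pow_sub_pow q 1 r)
  have hnd : Fintype.card Kˣ / d = m * e := by
    have hh : d * (m * e) = q ^ r - 1 := by rw [← hmq, ← hde]; ring
    rw [hcardU, ← hh, Nat.mul_div_cancel_left _ hd0]
  -- norm equivalence
  have hnorm : ∀ z : Kˣ, z ^ (m * e) = 1 ↔ (Algebra.norm k (z : K)) ^ e = 1 := by
    intro z
    have h1 : algebraMap k K (Algebra.norm k (z : K)) = (z : K) ^ m := npa _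
    constructor
    · intro hz
      apply (algebraMap k K).injective
      rw [map_pow, h1, ← pow_mul, map_one]
      have := congrArg (Units.val) hz
      rwa [Units.val_pow_eq_pow_val, Units.val_one] at this
    · intro hz
      ext
      rw [Units.val_pow_eq_pow_val, Units.val_one, pow_mul, ← h1, ← map_pow, hz, map_one]
  -- evaluate f
  have hfe : ∀ x : K, f.eval x = g.eval (x ^ d) := by
    intro x; rw [hf, eval_comp, eval_pow, eval_X]
  -- split off zero and pass to units
  have hsplit : ∑ x : K, ψ (Algebra.trace k K (f.eval x)) =
      ψ (Algebra.trace k K (g.eval 0)) +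
        ∑ u : Kˣ, ψ (Algebra.trace k K (g.eval (((u ^ d : Kˣ) : K)))) := by
    simp only [hfe]
    rw [← Finset.add_sum_erase Finset.univ _ (Finset.mem_univ (0 : K))]
    congr 1
    · rw [zero_pow hd0.ne']
    · refine (Finset.sum_bij' (i := fun (u : Kˣ) (_ : u ∈ Finset.univ) => (u : K))
        (j := fun x hx => Units.mk0 x (Finset.ne_of_mem_erase hx))
        (fun u _ => Finset.mem_erase.2 ⟨Units.ne_zero u, Finset.mem_univ _⟩)
        (fun x _ => Finset.mem_univ _)
        (fun u _ => Units.ext (by simp))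
        (fun x hx => by simp)
        (fun u _ => by rw [Units.val_pow_eq_pow_val])).symm
  rw [hsplit]
  congr 1
  -- now use the counting lemma
  rw [spa d hdK hd0 (fun z => ψ (Algebra.trace k K (g.eval (z : K)))), hnd]
  congr 1
  -- biUnion decomposition
  have hU : (Finset.univ.filter fun z : Kˣ => z ^ (m * e) = 1) =
      (Finset.univ.filter fun μ : kˣ => μ ^ e = 1).biUnion
        (fun μ => Finset.univ.filter fun x : Kˣ => Algebra.norm k (x : K) = (μ : k)) := by
    ext z
    simp only [Finset.mem_filter, Finset.mem_biUnion, Finset.mem_univ, true_and]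
    constructor
    · intro hz
      have hz' := (hnorm z).1 hz
      have hu : IsUnit (Algebra.norm k (z : K)) := z.isUnit.map (Algebra.norm k)
      refine ⟨hu.unit, Units.ext ?_, hu.unit_spec.symm⟩
      rw [Units.val_pow_eq_pow_val, hu.unit_spec, hz', Units.val_one]
    · rintro ⟨μ, hμ, hNz⟩
      apply (hnorm z).2
      rw [hNz, ← Units.val_pow_eq_pow_val, hμ, Units.val_one]
  have hdisj : ∀ μ₁ ∈ Finset.univ.filter (fun μ : kˣ => μ ^ e = 1),
      ∀ μ₂ ∈ Finset.univ.filter (fun μ : kˣ => μ ^ e = 1), μ₁ ≠ μ₂ →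
      Disjoint (Finset.univ.filter fun x : Kˣ => Algebra.norm k (x : K) = (μ₁ : k))
        (Finset.univ.filter fun x : Kˣ => Algebra.norm k (x : K) = (μ₂ : k)) := by
    intro μ₁ _ μ₂ _ hne
    rw [Finset.disjoint_left]
    intro x h1 h2
    rw [Finset.mem_filter] at h1 h2
    exact hne (Units.ext (h1.2 ▸ h2.2 ▸ rfl))
  rw [hU, Finset.sum_biUnion hdisj]
end main


open scoped Classical in
/-- For `f(X) = g(X^{(q−1)/e})`,
`∑_{x ∈ k_r} ψ(Tr(f(x))) = ψ(Tr(g(0))) + ((q−1)/e) ∑_{μ^e = 1} ∑_{N(x) = μ} ψ(Tr(g(x)))`. -/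
theorem stmt4 {k K : Type*} [Field k] [Fintype k] [Field K] [Fintype K] [Algebra k K]
    (q r e : ℕ) (hq : Fintype.card k = q) (hr : 1 ≤ r) (hK : Fintype.card K = q ^ r)
    (he : 1 ≤ e) (hdvd : e ∣ q - 1)
    (g f : Polynomial K) (hf : f = g.comp (X ^ ((q - 1) / e)))
    (ψ : AddChar k ℂ) (hψ : ψ ≠ 1) :
    ∑ x : K, ψ (Algebra.trace k K (f.eval x)) =
      ψ (Algebra.trace k K (g.eval 0)) +
        (((q - 1) / e : ℕ) : ℂ) *
          ∑ μ ∈ Finset.univ.filter (fun μ : kˣ => μ ^ e = 1),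
            ∑ x ∈ Finset.univ.filter (fun x : Kˣ => Algebra.norm k (x : K) = (μ : k)),
              ψ (Algebra.trace k K (g.eval (x : K))) := by
  classical
  exact stmt4' q r e hq hr hK he hdvd g f hf ψ hψ (normPowAux q r hq hK)
    (fun d hd hd0 F => sumPowAux hd hd0 F)
end

section
/- Let k be a field, let g ∈ k[X] have degree d ≥ 1, and define polynomials g_n ∈ k[X] by g_1 = g and g_{n+1}(X) = Res_t(g_n(t), g(X − t)), the resultant in the variable t. Then for every r ≥ 1 the polynomial g_r is nonzero, and the set of roots of g_r in an algebraic closure k̄ of k is exactly {a_1 + ⋯ + a_r : a_1, …, a_r ∈ k̄ are roots of g}. -/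
open Polynomial

/-- The Sylvester matrix of two polynomials `p`, `q` over a commutative ring: a square
matrix of size `q.natDegree + p.natDegree`, whose first `q.natDegree` rows are the shifts
of the coefficients of `p` and whose remaining `p.natDegree` rows are the shifts of the
coefficients of `q`. -/
noncomputable def sylvesterMatrix {R : Type*} [CommRing R] (p q : Polynomial R) :
    Matrix (Fin (q.natDegree + p.natDegree)) (Fin (q.natDegree + p.natDegree)) R :=
  Matrix.of fun i j =>
    if (i : ℕ) < q.natDegree then
      (if (j : ℕ) ≤ p.natDegree + (i : ℕ) then p.coeff (p.natDegree + (i : ℕ) - (j : ℕ))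
        else 0)
    else
      (if (j : ℕ) ≤ (i : ℕ) then q.coeff ((i : ℕ) - (j : ℕ)) else 0)

/-- The resultant of two polynomials, as the determinant of their Sylvester matrix. -/
noncomputable def resultant {R : Type*} [CommRing R] (p q : Polynomial R) : R :=
  (sylvesterMatrix p q).det

namespace Stmt11Aux

variable {K : Type*} [Field K]

noncomputable def polyOfVec (n : ℕ) (w : ℕ → K) : Polynomial K :=
  ∑ i ∈ Finset.range n, Polynomial.C (w i) * Polynomial.X ^ (n - 1 - i)

lemma polyOfVec_congr {n : ℕ} {w w' : ℕ → K} (h : ∀ i < n, w i = w' i) :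
    polyOfVec n w = polyOfVec n w' :=
  Finset.sum_congr rfl fun i hi => by rw [h i (Finset.mem_range.mp hi)]

lemma coeff_polyOfVec (n : ℕ) (w : ℕ → K) (m : ℕ) :
    (polyOfVec n w).coeff m = if m < n then w (n - 1 - m) else 0 := by
  unfold polyOfVec
  rw [finset_sum_coeff]
  simp only [coeff_C_mul, coeff_X_pow, mul_ite, mul_one, mul_zero]
  by_cases hm : m < n
  · rw [if_pos hm, Finset.sum_eq_single (n - 1 - m)]
    · rw [if_pos (by omega)]
    · intro i hi hne
      rw [if_neg]
      simp only [Finset.mem_range] at hi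
      omega
    · intro h
      exact absurd (Finset.mem_range.mpr (by omega)) h
  · rw [if_neg hm]
    refine Finset.sum_eq_zero fun i hi => ?_
    rw [if_neg]
    simp only [Finset.mem_range] at hi
    omega

lemma natDegree_polyOfVec_lt (n : ℕ) (hn : 0 < n) (w : ℕ → K) :
    (polyOfVec n w).natDegree < n := by
  refine lt_of_le_of_lt (natDegree_sum_le_of_forall_le _ _ fun i hi => ?_) (Nat.sub_lt hn one_pos)
  exact le_trans (natDegree_C_mul_le _ _) (by rw [natDegree_X_pow]; omega)

lemma polyOfVec_coeffs (n : ℕ) (A : Polynomial K) (hA : A.natDegree < n) :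
    polyOfVec n (fun i => A.coeff (n - 1 - i)) = A := by
  ext m
  rw [coeff_polyOfVec]
  split_ifs with h
  · congr 1; omega
  · exact (coeff_eq_zero_of_natDegree_lt (by omega)).symm

lemma coeff_polyOfVec_mul (n : ℕ) (w : ℕ → K) (p : Polynomial K) (m : ℕ) :
    (polyOfVec n w * p).coeff m
      = ∑ i ∈ Finset.range n,
          w i * (if n - 1 - i ≤ m then p.coeff (m - (n - 1 - i)) else 0) := by
  unfold polyOfVec
  rw [Finset.sum_mul, finset_sum_coeff]
  refine Finset.sum_congr rfl fun i _ => ?_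
  rw [mul_assoc, mul_comm (Polynomial.X ^ _) p, coeff_C_mul, coeff_mul_X_pow']

lemma vecMul_sylvester (p q : Polynomial K) (w : ℕ → K)
    (j : Fin (q.natDegree + p.natDegree)) :
    Matrix.vecMul (fun i : Fin (q.natDegree + p.natDegree) => w (i : ℕ))
        (sylvesterMatrix p q) j
      = (polyOfVec q.natDegree w * p
          + polyOfVec p.natDegree (fun i => w (q.natDegree + i)) * q).coeff
          (q.natDegree + p.natDegree - 1 - (j : ℕ)) := by
  have hj : (j : ℕ) < q.natDegree + p.natDegree := j.2
  rw [coeff_add, coeff_polyOfVec_mul, coeff_polyOfVec_mul]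
  rw [Matrix.vecMul, dotProduct, Fin.sum_univ_add]
  congr 1
  · rw [Finset.sum_range fun i => _]
    refine Finset.sum_congr rfl fun i _ => ?_
    have hi : (i : ℕ) < q.natDegree := i.2
    simp only [sylvesterMatrix, Matrix.of_apply, Fin.coe_castAdd]
    rw [if_pos hi]
    congr 1
    split_ifs with h1 h2 h3
    · congr 1; omega
    · omega
    · omega
    · rfl
  · rw [Finset.sum_range fun i => _]
    refine Finset.sum_congr rfl fun i _ => ?_
    have hi : (i : ℕ) < p.natDegree := i.2
    simp only [sylvesterMatrix, Matrix.of_apply, Fin.coe_natAdd]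
    rw [if_neg (by omega)]
    congr 1
    split_ifs with h1 h2 h3
    · congr 1; omega
    · omega
    · omega
    · rfl

theorem resultant_eq_zero_iff' {p q : Polynomial K}
    (hp : 1 ≤ p.natDegree) (hq : 1 ≤ q.natDegree) :
    _root_.resultant p q = 0
      ↔ ∃ A B : Polynomial K, ¬(A = 0 ∧ B = 0) ∧ A.natDegree < q.natDegree
          ∧ B.natDegree < p.natDegree ∧ A * p + B * q = 0 := by
  rw [_root_.resultant, ← Matrix.exists_vecMul_eq_zero_iff]
  constructor
  · rintro ⟨v, hv0, hv⟩
    refine ⟨polyOfVec q.natDegree (fun i => if h : i < q.natDegree + p.natDegree then v ⟨i, h⟩ else 0),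
      polyOfVec p.natDegree (fun i => if h : q.natDegree + i < q.natDegree + p.natDegree
        then v ⟨q.natDegree + i, h⟩ else 0),
      ?_, natDegree_polyOfVec_lt _ (by omega) _, natDegree_polyOfVec_lt _ (by omega) _, ?_⟩
    case _ =>
      set w : ℕ → K := fun i => if h : i < q.natDegree + p.natDegree then v ⟨i, h⟩ else 0 with hw
      rintro ⟨hA, hB⟩
      apply hv0
      funext i
      simp only [Pi.zero_apply]
      have hi : (i : ℕ) < q.natDegree + p.natDegree := i.2
      by_cases hiq : (i : ℕ) < q.natDegree
      · have := congrArg (fun r => Polynomial.coeff r (q.natDegree - 1 - (i : ℕ))) hA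
        simp only [coeff_polyOfVec, coeff_zero] at this
        rw [if_pos (by omega)] at this
        have hii : q.natDegree - 1 - (q.natDegree - 1 - (i : ℕ)) = (i : ℕ) := by omega
        rw [hii] at this
        simpa [hw, hi] using this
      · have := congrArg
          (fun r => Polynomial.coeff r (p.natDegree - 1 - ((i : ℕ) - q.natDegree))) hB
        simp only [coeff_polyOfVec, coeff_zero] at this
        rw [if_pos (by omega)] at this
        have hii : p.natDegree - 1 - (p.natDegree - 1 - ((i : ℕ) - q.natDegree))
            = (i : ℕ) - q.natDegree := by omega
        rw [hii, dif_pos (by omega : q.natDegree + ((i : ℕ) - q.natDegree) < q.natDegree + p.natDegree)] at this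
        have hfin : (⟨q.natDegree + ((i : ℕ) - q.natDegree), by omega⟩
            : Fin (q.natDegree + p.natDegree)) = i := by
          apply Fin.ext
          simp only []
          omega
        rw [hfin] at this
        exact this
    case _ =>
      set w : ℕ → K := fun i => if h : i < q.natDegree + p.natDegree then v ⟨i, h⟩ else 0 with hw
      have hvw : v = fun i : Fin (q.natDegree + p.natDegree) => w (i : ℕ) := by
        funext i
        simp only [hw, i.2, dif_pos, Fin.eta]
      have hw2 : (fun i => if h : q.natDegree + i < q.natDegree + p.natDegree
          then v ⟨q.natDegree + i, h⟩ else 0) = fun i => w (q.natDegree + i) := rfl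
      rw [hw2]
      ext m
      rw [coeff_zero]
      by_cases hm : m < q.natDegree + p.natDegree
      · have := congrFun hv ⟨q.natDegree + p.natDegree - 1 - m, by omega⟩
        rw [hvw, vecMul_sylvester] at this
        simp only [Pi.zero_apply] at this
        have hj : q.natDegree + p.natDegree - 1 - (q.natDegree + p.natDegree - 1 - m) = m := by
          omega
        rw [hj] at this
        exact this
      · refine coeff_eq_zero_of_natDegree_lt (lt_of_le_of_lt (natDegree_add_le _ _) ?_)
        have h1 := natDegree_mul_le (p := polyOfVec q.natDegree w) (q := p)
        have h2 := natDegree_mul_le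
          (p := polyOfVec p.natDegree (fun i => w (q.natDegree + i))) (q := q)
        have h3 := natDegree_polyOfVec_lt q.natDegree (by omega) w
        have h4 := natDegree_polyOfVec_lt p.natDegree (by omega) (fun i => w (q.natDegree + i))
        simp only [max_lt_iff]
        omega
  · rintro ⟨A, B, hne, hA, hB, hAB⟩
    set w : ℕ → K := fun i =>
      if i < q.natDegree then A.coeff (q.natDegree - 1 - i)
      else B.coeff (p.natDegree - 1 - (i - q.natDegree)) with hw
    have hAw : polyOfVec q.natDegree w = A := by
      rw [polyOfVec_congr (w' := fun i => A.coeff (q.natDegree - 1 - i))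
        (fun i hi => by simp [hw, hi])]
      exact polyOfVec_coeffs _ _ hA
    have hBw : polyOfVec p.natDegree (fun i => w (q.natDegree + i)) = B := by
      rw [polyOfVec_congr (w' := fun i => B.coeff (p.natDegree - 1 - i))
        (fun i hi => by simp [hw])]
      exact polyOfVec_coeffs _ _ hB
    refine ⟨fun i : Fin (q.natDegree + p.natDegree) => w (i : ℕ), ?_, ?_⟩
    · intro hv
      apply hne
      constructor
      · rw [← hAw]
        refine polyOfVec_congr (w' := fun _ => 0) (fun i hi => ?_) |>.trans (by simp [polyOfVec])
        exact congrFun hv ⟨i, by omega⟩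
      · rw [← hBw]
        refine polyOfVec_congr (w' := fun _ => 0) (fun i hi => ?_) |>.trans (by simp [polyOfVec])
        exact congrFun hv ⟨q.natDegree + i, by omega⟩
    · funext j
      rw [vecMul_sylvester, hAw, hBw, hAB]
      simp

theorem resultant_eq_zero_iff {K : Type*} [Field K] [IsAlgClosed K] {p q : Polynomial K}
    (hp : 1 ≤ p.natDegree) (hq : 1 ≤ q.natDegree) :
    _root_.resultant p q = 0 ↔ ∃ x : K, p.eval x = 0 ∧ q.eval x = 0 := by
  have hp0 : p ≠ 0 := fun h => by simp [h] at hp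
  have hq0 : q ≠ 0 := fun h => by simp [h] at hq
  rw [resultant_eq_zero_iff' hp hq]
  constructor
  · rintro ⟨A, B, hne, hA, hB, hAB⟩
    by_contra hroot
    push_neg at hroot
    have hcop : IsCoprime p q := by
      rw [Polynomial.isCoprime_iff_aeval_ne_zero_of_isAlgClosed (k := K) K p q]
      intro a
      rcases eq_or_ne (p.eval a) 0 with h | h
      · exact Or.inr (by simpa [Polynomial.coe_aeval_eq_eval] using hroot a h)
      · exact Or.inl (by simpa [Polynomial.coe_aeval_eq_eval] using h)
    have hB0 : B ≠ 0 := by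
      rintro rfl
      simp only [zero_mul, add_zero, mul_eq_zero] at hAB
      exact hne ⟨hAB.resolve_right hp0, rfl⟩
    have hdvd : p ∣ B * q := ⟨-A, by linear_combination hAB⟩
    have := Polynomial.natDegree_le_of_dvd (hcop.dvd_of_dvd_mul_right hdvd) hB0
    omega
  · rintro ⟨x, hpx, hqx⟩
    obtain ⟨p₁, hp₁⟩ := (dvd_iff_isRoot.mpr hpx : (X - C x) ∣ p)
    obtain ⟨q₁, hq₁⟩ := (dvd_iff_isRoot.mpr hqx : (X - C x) ∣ q)
    have hXC : (X - C x : Polynomial K) ≠ 0 := X_sub_C_ne_zero x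
    have hp₁0 : p₁ ≠ 0 := fun h => hp0 (by rw [hp₁, h, mul_zero])
    have hq₁0 : q₁ ≠ 0 := fun h => hq0 (by rw [hq₁, h, mul_zero])
    have hdp : p.natDegree = 1 + p₁.natDegree := by
      rw [hp₁, natDegree_mul hXC hp₁0, natDegree_X_sub_C]
    have hdq : q.natDegree = 1 + q₁.natDegree := by
      rw [hq₁, natDegree_mul hXC hq₁0, natDegree_X_sub_C]
    exact ⟨q₁, -p₁, fun h => hq₁0 h.1, by omega, by
        rw [natDegree_neg]; omega, by rw [hp₁, hq₁]; ring⟩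

theorem resultant_map {R S : Type*} [CommRing R] [CommRing S] (phi : R →+* S)
    (p q : Polynomial R)
    (hp : (p.map phi).natDegree = p.natDegree) (hq : (q.map phi).natDegree = q.natDegree) :
    _root_.resultant (p.map phi) (q.map phi) = phi (_root_.resultant p q) := by
  have hE : q.natDegree + p.natDegree = (q.map phi).natDegree + (p.map phi).natDegree := by
    rw [hp, hq]
  have key : sylvesterMatrix (p.map phi) (q.map phi)
      = Matrix.reindex (finCongr hE) (finCongr hE) ((sylvesterMatrix p q).map phi) := by
    ext i j
    simp only [sylvesterMatrix, Matrix.reindex_apply, Matrix.map_apply, Matrix.of_apply,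
      Matrix.submatrix_apply, hp, hq, coeff_map, finCongr_symm, finCongr_apply, Fin.coe_cast,
      apply_ite phi, map_zero]
  rw [_root_.resultant, _root_.resultant, key, Matrix.det_reindex_self]
  exact (RingHom.map_det phi _).symm

theorem step {k : Type*} [Field k] (g h : Polynomial k) (hg : 1 ≤ g.natDegree)
    (hh : 1 ≤ h.natDegree) (x : AlgebraicClosure k) :
    Polynomial.aeval x (_root_.resultant (h.map (Polynomial.C : k →+* Polynomial k))
        (Polynomial.aeval (Polynomial.C Polynomial.X - Polynomial.X
          : Polynomial (Polynomial k)) g)) = 0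
      ↔ ∃ t : AlgebraicClosure k,
          Polynomial.aeval t h = 0 ∧ Polynomial.aeval (x - t) g = 0 := by
  set psi : Polynomial k →+* AlgebraicClosure k := (Polynomial.aeval x : Polynomial k →ₐ[k] AlgebraicClosure k).toRingHom with hpsi
  have hq' : (Polynomial.aeval (Polynomial.C Polynomial.X - Polynomial.X
        : Polynomial (Polynomial k)) g)
      = (g.map (Polynomial.C : k →+* Polynomial k)).comp
          (Polynomial.C Polynomial.X - Polynomial.X) := by
    have halg : algebraMap k (Polynomial (Polynomial k))
        = (Polynomial.C : Polynomial k →+* Polynomial (Polynomial k)).comp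
            (Polynomial.C : k →+* Polynomial k) := by
      ext r
      rw [RingHom.comp_apply, Polynomial.algebraMap_apply, Polynomial.algebraMap_eq]
    rw [Polynomial.comp, Polynomial.eval₂_map, Polynomial.aeval_def, halg]
  have hCinj : Function.Injective (Polynomial.C : k →+* Polynomial k) := Polynomial.C_injective
  have ndu : (Polynomial.C Polynomial.X - Polynomial.X
      : Polynomial (Polynomial k)).natDegree = 1 := by
    rw [← natDegree_neg, neg_sub, natDegree_X_sub_C]
  have nd_gmap : (g.map (Polynomial.C : k →+* Polynomial k)).natDegree = g.natDegree :=
    natDegree_map_eq_of_injective hCinj g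
  have ndq' : (Polynomial.aeval (Polynomial.C Polynomial.X - Polynomial.X
      : Polynomial (Polynomial k)) g).natDegree = g.natDegree := by
    rw [hq', natDegree_comp, nd_gmap, ndu, mul_one]
  have ndp' : (h.map (Polynomial.C : k →+* Polynomial k)).natDegree = h.natDegree :=
    natDegree_map_eq_of_injective hCinj h
  have hpsiC : psi.comp (Polynomial.C : k →+* Polynomial k) = algebraMap k (AlgebraicClosure k) := by
    ext r
    simp [hpsi]
  have hPmap : (h.map (Polynomial.C : k →+* Polynomial k)).map psi
      = h.map (algebraMap k (AlgebraicClosure k)) := by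
    rw [Polynomial.map_map, hpsiC]
  have hu : (Polynomial.C Polynomial.X - Polynomial.X
      : Polynomial (Polynomial k)).map psi = Polynomial.C x - Polynomial.X := by
    simp [hpsi]
  have hQmap : (Polynomial.aeval (Polynomial.C Polynomial.X - Polynomial.X
        : Polynomial (Polynomial k)) g).map psi
      = (g.map (algebraMap k (AlgebraicClosure k))).comp (Polynomial.C x - Polynomial.X) := by
    rw [hq', Polynomial.map_comp, Polynomial.map_map, hpsiC, hu]
  have ndP : (h.map (algebraMap k (AlgebraicClosure k))).natDegree = h.natDegree := natDegree_map _
  have ndxu : (Polynomial.C x - Polynomial.X : Polynomial (AlgebraicClosure k)).natDegree = 1 := by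
    rw [← natDegree_neg, neg_sub, natDegree_X_sub_C]
  have ndQ : ((g.map (algebraMap k (AlgebraicClosure k))).comp
      (Polynomial.C x - Polynomial.X)).natDegree = g.natDegree := by
    rw [natDegree_comp, natDegree_map, ndxu, mul_one]
  have hres : Polynomial.aeval x (_root_.resultant (h.map (Polynomial.C : k →+* Polynomial k))
        (Polynomial.aeval (Polynomial.C Polynomial.X - Polynomial.X
          : Polynomial (Polynomial k)) g))
      = _root_.resultant (h.map (algebraMap k (AlgebraicClosure k)))
          ((g.map (algebraMap k (AlgebraicClosure k))).comp (Polynomial.C x - Polynomial.X)) := by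
    rw [← hPmap, ← hQmap]
    refine (resultant_map psi _ _ ?_ ?_).symm
    · rw [hPmap, ndP, ndp']
    · rw [hQmap, ndQ, ndq']
  rw [hres, Stmt11Aux.resultant_eq_zero_iff (by omega) (by omega)]
  refine exists_congr fun t => ?_
  rw [Polynomial.eval_map_algebraMap, Polynomial.eval_comp]
  simp [Polynomial.eval_map_algebraMap]

end Stmt11Aux

/-- with `g_1 = g` and `g_{n+1}(X) = Res_t(g_n(t), g(X − t))`, for every
`r ≥ 1` the polynomial `g_r` is nonzero and its roots in an algebraic closure are exactly
the sums of `r` roots of `g`. -/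
theorem stmt11 {k : Type*} [Field k] (g : Polynomial k) (d : ℕ) (hgd : g.natDegree = d)
    (hd1 : 1 ≤ d)
    (G : ℕ → Polynomial k) (hG1 : G 1 = g)
    (hGsucc : ∀ n, 1 ≤ n →
      G (n + 1) = _root_.resultant ((G n).map (Polynomial.C : k →+* Polynomial k))
        (Polynomial.aeval
          (Polynomial.C Polynomial.X - Polynomial.X : Polynomial (Polynomial k)) g)) :
    ∀ r, 1 ≤ r → G r ≠ 0 ∧
      {x : AlgebraicClosure k | Polynomial.aeval x (G r) = 0} =
        {x : AlgebraicClosure k | ∃ a : Fin r → AlgebraicClosure k,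
          (∀ i, Polynomial.aeval (a i) g = 0) ∧ x = ∑ i, a i} := by
  have hg1 : 1 ≤ g.natDegree := hgd ▸ hd1
  have hg0 : g ≠ 0 := fun h0 => by simp [h0] at hg1
  intro r hr
  induction r, hr using Nat.le_induction with
  | base =>
    refine ⟨by rw [hG1]; exact hg0, ?_⟩
    rw [hG1]
    ext x
    simp only [Set.mem_setOf_eq]
    constructor
    · intro hx
      exact ⟨fun _ => x, fun _ => hx, by simp⟩
    · rintro ⟨a, ha, rfl⟩
      simpa [Fin.sum_univ_one] using ha 0
  | succ n hn ih =>
    obtain ⟨hGn0, hset⟩ := ih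
    obtain ⟨y0, hy0⟩ := IsAlgClosed.exists_aeval_eq_zero (AlgebraicClosure k) g
      (Polynomial.natDegree_pos_iff_degree_pos.mp (by omega)).ne'
    have hinj : ∀ c : k, algebraMap k (AlgebraicClosure k) c = 0 → c = 0 := fun c hc =>
      (algebraMap k (AlgebraicClosure k)).injective (hc.trans (map_zero _).symm)
    have hGnroot : Polynomial.aeval (∑ _i : Fin n, y0) (G n) = 0 :=
      (Set.ext_iff.mp hset _).mpr ⟨fun _ => y0, fun _ => hy0, rfl⟩
    have hGn1 : 1 ≤ (G n).natDegree :=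
      Polynomial.natDegree_pos_of_aeval_root hGn0 hGnroot hinj
    have hstep : ∀ y : AlgebraicClosure k, Polynomial.aeval y (G (n + 1)) = 0
        ↔ ∃ t : AlgebraicClosure k,
            Polynomial.aeval t (G n) = 0 ∧ Polynomial.aeval (y - t) g = 0 := by
      intro y
      rw [hGsucc n hn]
      exact Stmt11Aux.step g (G n) hg1 hGn1 y
    have hfin1 : {y : AlgebraicClosure k | Polynomial.aeval y (G n) = 0}.Finite := by
      have he : {y : AlgebraicClosure k | Polynomial.aeval y (G n) = 0}
          = {y | ((G n).map (algebraMap k (AlgebraicClosure k))).IsRoot y} := by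
        ext y
        simp [Polynomial.IsRoot, Polynomial.eval_map_algebraMap]
      rw [he]
      exact Polynomial.finite_setOf_isRoot
        ((Polynomial.map_ne_zero_iff (algebraMap k (AlgebraicClosure k)).injective).mpr hGn0)
    have hfin2 : {y : AlgebraicClosure k | Polynomial.aeval y g = 0}.Finite := by
      have he : {y : AlgebraicClosure k | Polynomial.aeval y g = 0}
          = {y | (g.map (algebraMap k (AlgebraicClosure k))).IsRoot y} := by
        ext y
        simp [Polynomial.IsRoot, Polynomial.eval_map_algebraMap]
      rw [he]
      exact Polynomial.finite_setOf_isRoot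
        ((Polynomial.map_ne_zero_iff (algebraMap k (AlgebraicClosure k)).injective).mpr hg0)
    have hbadfin : {y : AlgebraicClosure k | ∃ t : AlgebraicClosure k,
        Polynomial.aeval t (G n) = 0 ∧ Polynomial.aeval (y - t) g = 0}.Finite := by
      refine Set.Finite.subset (Set.Finite.image2 (· + ·) hfin1 hfin2) ?_
      rintro y ⟨t, h1, h2⟩
      exact Set.mem_image2.mpr ⟨t, h1, y - t, h2, by ring⟩
    obtain ⟨x0, hx0⟩ := hbadfin.infinite_compl.nonempty
    have hne : G (n + 1) ≠ 0 := by
      intro h0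
      exact hx0 ((hstep x0).mp (by rw [h0, map_zero]))
    refine ⟨hne, ?_⟩
    ext y
    simp only [Set.mem_setOf_eq]
    rw [hstep y]
    constructor
    · rintro ⟨t, ht, hyt⟩
      obtain ⟨a, ha, hta⟩ := (Set.ext_iff.mp hset t).mp ht
      refine ⟨Fin.snoc a (y - t), ?_, ?_⟩
      · intro i
        refine Fin.lastCases ?_ ?_ i
        · simpa using hyt
        · intro j
          simpa using ha j
      · rw [Fin.sum_univ_castSucc]
        simp only [Fin.snoc_castSucc, Fin.snoc_last]
        rw [← hta]
        ring
    · rintro ⟨a, ha, rfl⟩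
      refine ⟨∑ j : Fin n, a j.castSucc, ?_, ?_⟩
      · exact (Set.ext_iff.mp hset _).mpr ⟨fun j => a j.castSucc, fun j => ha _, rfl⟩
      · have he : (∑ i : Fin (n + 1), a i) - (∑ j : Fin n, a j.castSucc)
            = a (Fin.last n) := by
          rw [Fin.sum_univ_castSucc]
          ring
        rw [he]
        exact ha _
end

section
/- Let k = 𝔽_q be a finite field of odd characteristic p, let k_2 = 𝔽_{q²} be the quadratic extension of k, and let ρ : kˣ → ℂ be the quadratic character (the unique multiplicative character of order 2), extended by zero to all of k. Then the sum ∑_{x ∈ k_2, x^{q+1} = 1} ρ(N_{k_2/k}(x² + 1)) is a real number and is greater than or equal to q − 1. -/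
open Polynomial

open scoped Classical in
/-- At most `n` solutions to `y ^ n = b` in a field. -/
lemma aux_roots_le {K : Type*} [Field K] [Fintype K] (n : ℕ) (hn : n ≠ 0) (b : K) :
    (Finset.univ.filter fun y : K => y ^ n = b).card ≤ n := by
  classical
  have hmonic : (X ^ n - C b : K[X]).Monic := monic_X_pow_sub_C b hn
  have hsub : (Finset.univ.filter fun y : K => y ^ n = b) ⊆
      (X ^ n - C b : K[X]).roots.toFinset := by
    intro y hy
    rw [Finset.mem_filter] at hy
    rw [Multiset.mem_toFinset, mem_roots hmonic.ne_zero]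
    simp [IsRoot, sub_eq_zero, hy.2]
  calc (Finset.univ.filter fun y : K => y ^ n = b).card
      ≤ (X ^ n - C b : K[X]).roots.toFinset.card := Finset.card_le_card hsub
    _ ≤ Multiset.card (X ^ n - C b : K[X]).roots := Multiset.toFinset_card_le _
    _ ≤ (X ^ n - C b : K[X]).natDegree := card_roots' _
    _ = n := natDegree_X_pow_sub_C

/-- An element of `K` fixed by `y ↦ y ^ |k|` lies in the image of `k`. -/
lemma aux_fixed {k K : Type*} [Field k] [Fintype k] [Field K] [Fintype K] [Algebra k K]
    {u : K} (hu : u ^ Fintype.card k = u) : ∃ c : k, algebraMap k K c = u := by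
  classical
  set q := Fintype.card k with hq
  have hq2 : 1 < q := Fintype.one_lt_card
  set P : K[X] := X ^ q - X with hP
  have hPdeg : P.degree = q := by
    have h1 : (X : K[X]).degree < (X ^ q : K[X]).degree := by
      rw [degree_X, degree_X_pow]; exact_mod_cast hq2
    rw [hP, degree_sub_eq_left_of_degree_lt h1, degree_X_pow]
  have hP0 : P ≠ 0 := by
    intro h
    rw [h, degree_zero] at hPdeg
    exact absurd hPdeg.symm (by simp)
  have hPnat : P.natDegree = q := natDegree_eq_of_degree_eq_some hPdeg
  set s : Finset K := Finset.univ.image (algebraMap k K) with hs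
  have hsub : s ⊆ P.roots.toFinset := by
    intro y hy
    obtain ⟨c, -, rfl⟩ := Finset.mem_image.mp hy
    rw [Multiset.mem_toFinset, mem_roots hP0]
    simp only [IsRoot, hP, eval_sub, eval_pow, eval_X]
    rw [← map_pow, FiniteField.pow_card, sub_self]
  have hcard_s : s.card = q := by
    rw [hs, Finset.card_image_of_injective _ (algebraMap k K).injective, Finset.card_univ]
  have hcard_roots : P.roots.toFinset.card ≤ q :=
    le_trans (Multiset.toFinset_card_le _) (by simpa [hPnat] using P.card_roots')
  have heq : s = P.roots.toFinset :=
    Finset.eq_of_subset_of_card_le hsub (by rw [hcard_s]; exact hcard_roots)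
  have hu' : u ∈ P.roots.toFinset := by
    rw [Multiset.mem_toFinset, mem_roots hP0]
    simp only [IsRoot, hP, eval_sub, eval_pow, eval_X]
    rw [hu, sub_self]
  rw [← heq] at hu'
  obtain ⟨c, -, hc⟩ := Finset.mem_image.mp hu'
  exact ⟨c, hc⟩

open scoped Classical in
/-- for `k = 𝔽_q` of odd characteristic, `k_2 = 𝔽_{q²}` and `ρ` the
quadratic character of `k`, the sum `∑_{x^{q+1} = 1} ρ(N_{k_2/k}(x² + 1))` is a real
number `≥ q − 1`. -/
theorem stmt19 {k K : Type*} [Field k] [Fintype k] [Field K] [Fintype K] [Algebra k K]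
    (p q : ℕ) (hp : p = ringChar k) (hodd : Odd p) (hq : Fintype.card k = q)
    (hK : Fintype.card K = q ^ 2)
    (ρ : MulChar k ℂ) (hρ : orderOf ρ = 2) :
    ∃ s : ℝ,
      (∑ x ∈ Finset.univ.filter (fun x : K => x ^ (q + 1) = 1),
          ρ (Algebra.norm k (x ^ 2 + 1))) = (s : ℂ) ∧
      (q : ℝ) - 1 ≤ s := by
  classical
  haveI : FiniteDimensional k K := Module.Finite.of_finite
  have hq2 : 2 ≤ q := by rw [← hq]; exact Fintype.one_lt_card
  -- characteristic facts
  haveI hCk : CharP k p := hp ▸ ringChar.charP k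
  haveI hCK : CharP K p := charP_of_injective_algebraMap (algebraMap k K).injective p
  have hp2 : p ≠ 2 := by
    intro h; rw [h] at hodd; exact (Nat.not_odd_iff_even.mpr even_two) hodd
  haveI hpp : Fact p.Prime := ⟨CharP.char_is_prime k p⟩
  have hrK : ringChar K ≠ 2 := by rw [ringChar.eq K p]; exact hp2
  have hqodd : q % 2 = 1 := by
    rw [← hq]; exact FiniteField.odd_card_of_char_ne_two (by rw [hp] at hp2; exact hp2)
  obtain ⟨t, ht⟩ : ∃ t, q = 2 * t + 1 := ⟨q / 2, by omega⟩
  obtain ⟨n, -, hn⟩ := FiniteField.card k p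
  rw [hq] at hn
  -- finrank
  have hfr : Module.finrank k K = 2 := by
    have hc : q ^ 2 = q ^ Module.finrank k K := by
      rw [← hK, ← hq]; exact Module.card_eq_pow_finrank
    exact (Nat.pow_right_injective hq2 hc).symm
  set S := Finset.univ.filter (fun x : K => x ^ (q + 1) = 1) with hS
  -- each term is 0 or 1
  have key : ∀ x ∈ S, (ρ (Algebra.norm k (x ^ 2 + 1)) : ℂ)
      = if x ^ 2 + 1 = 0 then 0 else 1 := by
    intro x hxS
    have hx : x ^ (q + 1) = 1 := (Finset.mem_filter.mp hxS).2
    have hx0 : x ≠ 0 := by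
      rintro rfl
      rw [zero_pow (Nat.succ_ne_zero q)] at hx
      exact one_ne_zero hx.symm
    by_cases h2 : x ^ 2 + 1 = 0
    · rw [if_pos h2, h2]
      rw [Algebra.norm_zero]
      exact ρ.map_zero
    · rw [if_neg h2]
      -- x is a square in K
      have hxsq : IsSquare x := by
        rw [FiniteField.isSquare_iff hrK hx0]
        have e : q ^ 2 = 2 * ((q + 1) * t) + 1 := by rw [ht]; ring
        have hdiv : Fintype.card K / 2 = (q + 1) * t := by rw [hK, e]; omega
        rw [hdiv, pow_mul, hx, one_pow]
      obtain ⟨w, hw⟩ := hxsq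
      have hw0 : w ≠ 0 := by rintro rfl; rw [mul_zero] at hw; exact hx0 hw
      -- u = x + x⁻¹ lies in k
      have hxq : x ^ q = x⁻¹ := by
        refine eq_inv_of_mul_eq_one_left ?_
        rw [← pow_succ]; exact hx
      have huq : (x + x⁻¹) ^ q = x + x⁻¹ := by
        rw [hn, add_pow_char_pow, ← hn, hxq, inv_pow, hxq, inv_inv, add_comm]
      obtain ⟨c, hc⟩ := aux_fixed (k := k) (by rw [hq]; exact huq)
      have hxu : x * (x + x⁻¹) = x ^ 2 + 1 := by
        rw [mul_add, mul_inv_cancel₀ hx0, ← sq]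
      have hu0 : (x + x⁻¹) ≠ 0 := by
        intro h; exact h2 (by rw [← hxu, h, mul_zero])
      have hc0 : c ≠ 0 := by
        rintro rfl; rw [map_zero] at hc; exact hu0 hc.symm
      -- the norm is a nonzero square
      have hnorm : Algebra.norm k (x ^ 2 + 1) = (Algebra.norm k w * c) ^ 2 := by
        rw [← hxu, map_mul, ← hc, Algebra.norm_algebraMap, hfr, hw, map_mul]
        ring
      have ha : Algebra.norm k w * c ≠ 0 :=
        mul_ne_zero (Algebra.norm_ne_zero_iff.mpr hw0) hc0
      rw [hnorm, map_pow]
      have h1 : ρ (Algebra.norm k w * c) ^ 2 = (ρ ^ 2) (Algebra.norm k w * c) :=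
        (MulChar.pow_apply' ρ two_ne_zero _).symm
      rw [h1, ← hρ, pow_orderOf_eq_one]
      exact MulChar.one_apply_coe (Units.mk0 _ ha)
  -- cardinality of S
  have hScard : q + 1 ≤ S.card := by
    set T := Finset.univ.filter (fun y : K => y ≠ 0) with hT
    have hTcard : T.card = q ^ 2 - 1 := by
      rw [hT, Finset.filter_ne', Finset.card_erase_of_mem (Finset.mem_univ 0),
        Finset.card_univ, hK]
    have hmul : (q - 1) * (q + 1) = q ^ 2 - 1 := by
      obtain ⟨m, rfl⟩ : ∃ m, q = m + 2 := ⟨q - 2, by omega⟩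
      have e1 : (m + 2 - 1) * (m + 2 + 1) = (m + 1) * (m + 3) := by norm_num
      have e2 : (m + 2) ^ 2 = (m + 1) * (m + 3) + 1 := by ring
      omega
    have himg : T.image (fun y => y ^ (q - 1)) ⊆ S := by
      intro b hb
      obtain ⟨y, hy, rfl⟩ := Finset.mem_image.mp hb
      rw [hT, Finset.mem_filter] at hy
      rw [hS, Finset.mem_filter]
      refine ⟨Finset.mem_univ _, ?_⟩
      rw [← pow_mul, hmul, ← hK]
      exact FiniteField.pow_card_sub_one_eq_one y hy.2
    have hfib : ∀ b ∈ T.image (fun y => y ^ (q - 1)),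
        (T.filter fun y => y ^ (q - 1) = b).card ≤ q - 1 := by
      intro b _
      refine le_trans (Finset.card_le_card ?_) (aux_roots_le (q - 1) (by omega) b)
      intro y hy
      rw [Finset.mem_filter] at hy ⊢
      exact ⟨Finset.mem_univ _, hy.2⟩
    have h1 : T.card ≤ (q - 1) * (T.image (fun y => y ^ (q - 1))).card :=
      Finset.card_le_mul_card_image T (q - 1) hfib
    have h2 : (T.image (fun y => y ^ (q - 1))).card ≤ S.card :=
      Finset.card_le_card himg
    have h3 : (q - 1) * (q + 1) ≤ (q - 1) * S.card := by
      rw [hmul, ← hTcard]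
      exact le_trans h1 (Nat.mul_le_mul_left _ h2)
    exact Nat.le_of_mul_le_mul_left h3 (by omega)
  -- at most two bad points
  have hbad : (S.filter fun x : K => x ^ 2 + 1 = 0).card ≤ 2 := by
    refine le_trans (Finset.card_le_card ?_) (aux_roots_le 2 two_ne_zero (-1 : K))
    intro y hy
    rw [Finset.mem_filter] at hy ⊢
    exact ⟨Finset.mem_univ _, eq_neg_of_add_eq_zero_left hy.2⟩
  -- conclude
  refine ⟨((S.filter fun x : K => ¬ (x ^ 2 + 1 = 0)).card : ℝ), ?_, ?_⟩
  · rw [Finset.sum_congr rfl key, Finset.sum_ite]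
    simp
  · have hsplit := Finset.card_filter_add_card_filter_not
      (s := S) (fun x : K => x ^ 2 + 1 = 0)
    have hnat : q + 1 ≤ (S.filter fun x : K => ¬ (x ^ 2 + 1 = 0)).card + 2 := by omega
    have := (Nat.cast_le (α := ℝ)).mpr hnat
    push_cast at this
    linarith
end
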